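/- Let (E,w) be a row-finite weighted graph with at least one vertex whose weighted part is weakly well-behaved. Let o = x₁…x_m be a nod-path whose first letter is e_i for some weighted edge e∈E¹_w and some 2≤i≤w(e). Then o = p₁q₁*…p_nq_n* or o = p₁q₁*…p_{n−1}q_{n−1}*p_n, where n≥1, p₁,…,p_n are super-special paths in Ê and q₁,…,q_n are unweighted paths in Ê. -/

import Mathlib

/-!
Definitions for weighted graphs and weighted Leavitt path algebras,
following Hazrat–Preusser.  All weighted graphs are assumed row-finite
with at least one vertex (this is built into the structure).
-/

/-- A (row-finite, nonempty) weighted graph `(E,w)`. -/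
structure WeightedGraph : Type 1 where
  V : Type
  E : Type
  s : E → V
  r : E → V
  w : E → ℕ
  w_pos : ∀ e, 1 ≤ w e
  rowFinite : ∀ v : V, {e : E | s e = v}.Finite
  vNonempty : Nonempty V

namespace WeightedGraph

section GraphDefs

variable (G : WeightedGraph)

/-- `(E,w)` is a finite weighted graph. -/
def IsFinite : Prop := Finite G.V ∧ Finite G.E

/-- `(E,w)` is unweighted iff all edges have weight 1. -/
def IsUnweighted : Prop := ∀ e : G.E, G.w e = 1

/-- a sink is a vertex emitting no edges. -/
def IsSink (v : G.V) : Prop := ∀ e : G.E, G.s e ≠ v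

/-- `w(v) = max { w(e) ∣ e ∈ s⁻¹(v) }` (with `max ∅ = 0`). -/
noncomputable def vw (v : G.V) : ℕ := sSup (G.w '' {e : G.E | G.s e = v})

/-- Edges of the associated directed graph `Ê`: pairs `(e,i)` with `1 ≤ i ≤ w(e)`,
representing the edge `e_i`. -/
abbrev HatE : Type := {p : G.E × ℕ // 1 ≤ p.2 ∧ p.2 ≤ G.w p.1}

def hatS (x : G.HatE) : G.V := G.s x.1.1

def hatR (x : G.HatE) : G.V := G.r x.1.1

/-- Letters of the double graph `Ê_d`: `Sum.inl` is a real edge `e_i`,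
`Sum.inr` is a ghost edge `e_i^*`. -/
abbrev DL : Type := G.HatE ⊕ G.HatE

/-- source of a letter of `Ê_d`. -/
def dS : G.DL → G.V
  | Sum.inl x => G.hatS x
  | Sum.inr x => G.hatR x

/-- range of a letter of `Ê_d`. -/
def dR : G.DL → G.V
  | Sum.inl x => G.hatR x
  | Sum.inr x => G.hatS x

def dFlip : G.DL → G.DL
  | Sum.inl x => Sum.inr x
  | Sum.inr x => Sum.inl x

/-- the star `p ↦ p^*` of a d-word. -/
def dStar (l : List G.DL) : List G.DL := (l.map G.dFlip).reverse

/-- standard degree of a letter: `deg e_i = ε_i`, `deg e_i^* = -ε_i`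
(as finitely supported functions `ℕ →₀ ℤ`). -/
noncomputable def dDeg : G.DL → (ℕ →₀ ℤ)
  | Sum.inl x => Finsupp.single x.1.2 1
  | Sum.inr x => -(Finsupp.single x.1.2 1)

/-- homogeneous degree of a d-word. -/
noncomputable def dWordDeg (l : List G.DL) : ℕ →₀ ℤ := (l.map G.dDeg).sum

/-- `u ≥ v`: there is a path in `E` from `u` to `v`. -/
def Reaches : G.V → G.V → Prop :=
  Relation.ReflTransGen (fun u v => ∃ e : G.E, G.s e = u ∧ G.r e = v)

/-- a nontrivial path in `E`, given by its (nonempty) list of edges. -/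
def IsPath (l : List G.E) : Prop :=
  l ≠ [] ∧ l.Chain' (fun a b => G.r a = G.s b)

/-- source of a nontrivial path. -/
def pSrc? (l : List G.E) : Option G.V := l.head?.map G.s

/-- range of a nontrivial path. -/
def pRng? (l : List G.E) : Option G.V := l.getLast?.map G.r

/-- a cycle in `E`: a closed nontrivial path with pairwise distinct sources. -/
def IsCycle (l : List G.E) : Prop :=
  G.IsPath l ∧ G.pRng? l = G.pSrc? l ∧ (l.map G.s).Nodup

def Acyclic : Prop := ∀ l : List G.E, ¬ G.IsCycle l

/-- the cycle `l` has an exit. -/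
def CycleHasExit (l : List G.E) : Prop :=
  ∃ x ∈ l, ∃ e : G.E, G.s e = G.s x ∧ e ≠ x

def NoCycleHasExit : Prop := ∀ l : List G.E, G.IsCycle l → ¬ G.CycleHasExit l

/-- `v ∈ T(r(E¹_w))`: some weighted edge's range reaches `v`. -/
def InTRw (v : G.V) : Prop := ∃ g : G.E, 1 < G.w g ∧ G.Reaches (G.r g) v

/-- two edges are in line. -/
def InLine (e f : G.E) : Prop :=
  e = f ∨ G.Reaches (G.r e) (G.s f) ∨ G.Reaches (G.r f) (G.s e)

/-- Condition (i): no vertex emits two distinct weighted edges. -/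
def Cond1 : Prop := ∀ e f : G.E, 1 < G.w e → 1 < G.w f → G.s e = G.s f → e = f

/-- Condition (ii): no vertex of `T(r(E¹_w))` emits two distinct edges. -/
def Cond2 : Prop :=
  ∀ v : G.V, G.InTRw v → ∀ e f : G.E, G.s e = v → G.s f = v → e = f

/-- Condition (iii): weighted edges not in line have disjoint trees of their ranges. -/
def Cond3 : Prop :=
  ∀ e f : G.E, 1 < G.w e → 1 < G.w f → ¬ G.InLine e f →
    ∀ v : G.V, G.Reaches (G.r e) v → ¬ G.Reaches (G.r f) v

/-- Condition (iv): no cycle is based at a vertex of `T(r(E¹_w))`. -/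
def Cond4 : Prop :=
  ∀ l : List G.E, G.IsCycle l → ∀ v : G.V, G.pSrc? l = some v → ¬ G.InTRw v

/-- Condition (v): there is no "weighted/unweighted zig-zag cycle" of paths
`p₁,…,p_n,q₁,…,q_n` (indices cyclic, 0-based). -/
def Cond5 : Prop :=
  ¬ ∃ (n : ℕ) (hn : 0 < n) (p q : Fin n → List G.E),
      (∀ i, G.IsPath (p i)) ∧ (∀ i, G.IsPath (q i)) ∧
      (∀ i, G.pRng? (p i) = G.pRng? (q i)) ∧
      (∀ i : Fin n, G.pSrc? (p ⟨(i.1 + 1) % n, Nat.mod_lt _ hn⟩) = G.pSrc? (q i)) ∧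
      (∀ i, ∃ a, (p i).head? = some a ∧ 1 < G.w a) ∧
      (∀ i, ∃ a, (q i).head? = some a ∧ G.w a = 1) ∧
      (∀ i, ∃ a b, (p i).getLast? = some a ∧ (q i).getLast? = some b ∧ a ≠ b)

/-- the weighted part of `(E,w)` is weakly well-behaved. -/
def WeaklyWellBehaved : Prop := G.Cond1 ∧ G.Cond2 ∧ G.Cond3 ∧ G.Cond4

/-- the weighted part of `(E,w)` is well-behaved. -/
def WellBehaved : Prop := G.WeaklyWellBehaved ∧ G.Cond5

/-- a weighted edge is of type A if it is the only edge emitted by its source. -/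
def TypeA (e : G.E) : Prop := ∀ f : G.E, G.s f = G.s e → f = e

/-- `sp` is a choice of special edges: for every non-sink `v`, `sp v ∈ s⁻¹(v)`
and `w (sp v) = w(v)`. -/
def HasSpecial (sp : G.V → G.E) : Prop :=
  ∀ v : G.V, (∃ e : G.E, G.s e = v) → G.s (sp v) = v ∧ G.w (sp v) = G.vw v

/-- forbidden two-letter words, relative to a choice `sp` of special edges:
`e^v_i (e^v_j)^*` and `e_1^* f_1` (for `e,f` with the same source). -/
def Forbidden (sp : G.V → G.E) : G.DL → G.DL → Prop
  | Sum.inl a, Sum.inr b => a.1.1 = b.1.1 ∧ a.1.1 = sp (G.s a.1.1)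
  | Sum.inr a, Sum.inl b => a.1.2 = 1 ∧ b.1.2 = 1 ∧ G.s a.1.1 = G.s b.1.1
  | _, _ => False

/-- a d-word is a path in the double graph `Ê_d`. -/
def IsDWord (l : List G.DL) : Prop := l.Chain' (fun x y => G.dR x = G.dS y)

/-- source of a nontrivial d-path. -/
def dSrc? (l : List G.DL) : Option G.V := l.head?.map G.dS

/-- range of a nontrivial d-path. -/
def dRng? (l : List G.DL) : Option G.V := l.getLast?.map G.dR

/-- a nod-path: a d-path none of whose subwords is forbidden. -/
def IsNod (sp : G.V → G.E) (l : List G.DL) : Prop :=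
  G.IsDWord l ∧ l.Chain' (fun x y => ¬ G.Forbidden sp x y)

/-- a (nontrivial) nod²-path: a nod-path `p` such that `p²` is a nod-path. -/
def IsNod2 (sp : G.V → G.E) (l : List G.DL) : Prop :=
  l ≠ [] ∧ G.IsNod sp (l ++ l)

/-- a quasicycle: a nod²-path `p` such that no subword of `p²` of length `< |p|`
is a nod²-path. -/
def IsQuasicycle (sp : G.V → G.E) (l : List G.DL) : Prop :=
  G.IsNod2 sp l ∧
    ∀ m : List G.DL, m <:+: (l ++ l) → m.length < l.length → ¬ G.IsNod2 sp m

/-- a lenod-path: a nod-path `p` such that `o ++ p` is a nod-path for every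
nontrivial nod-path `o` with `r(o) = s(p)`. -/
def IsLenod (sp : G.V → G.E) (l : List G.DL) : Prop :=
  G.IsNod sp l ∧ ∀ o : List G.DL, o ≠ [] → G.IsNod sp o →
    G.dRng? o = G.dSrc? l → G.IsNod sp (o ++ l)

/-- a nontrivial path in `Ê`, as a nonempty list of edges of `Ê`. -/
def IsHatPath (l : List G.HatE) : Prop :=
  l ≠ [] ∧ l.Chain' (fun a b => G.hatR a = G.hatS b)

/-- `max { w(f) ∣ f ∈ s⁻¹(s(e)), f ≠ e }` (with `max ∅ = 0`). -/
noncomputable def maxOther (e : G.E) : ℕ :=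
  sSup (G.w '' {f : G.E | G.s f = G.s e ∧ f ≠ e})

/-- a super-special path in `Ê`. -/
def IsSuperSpecial (l : List G.HatE) : Prop :=
  G.IsHatPath l ∧ ∀ x ∈ l, G.maxOther x.1.1 < x.1.2

/-- an unweighted path in `Ê`. -/
def IsUnweightedPath (l : List G.HatE) : Prop :=
  G.IsHatPath l ∧ ∀ x ∈ l, G.w x.1.1 = 1

def hatSrc? (l : List G.HatE) : Option G.V := l.head?.map G.hatS

def hatRng? (l : List G.HatE) : Option G.V := l.getLast?.map G.hatR

/-- a closed nontrivial path in `Ê`. -/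
def IsHatClosed (l : List G.HatE) : Prop :=
  G.IsHatPath l ∧ G.hatRng? l = G.hatSrc? l

/-- a cycle in `Ê`. -/
def IsHatCycle (l : List G.HatE) : Prop :=
  G.IsHatPath l ∧ G.hatRng? l = G.hatSrc? l ∧ (l.map G.hatS).Nodup

/-- embedding of paths of `Ê` as d-words consisting of real edges. -/
def embR (l : List G.HatE) : List G.DL := l.map Sum.inl

end GraphDefs

section AlgebraDefs

variable (G : WeightedGraph) (K : Type) [Field K]

/-- generator of the free algebra corresponding to a vertex. -/
noncomputable def gV (v : G.V) : FreeAlgebra K (G.V ⊕ G.DL) :=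
  FreeAlgebra.ι K (Sum.inl v)

/-- generator of the free algebra corresponding to a (real or ghost) edge of `Ê_d`. -/
noncomputable def gD (x : G.DL) : FreeAlgebra K (G.V ⊕ G.DL) :=
  FreeAlgebra.ι K (Sum.inr x)

/-- `e_i`, interpreted as `0` if `i > w(e)` or `i = 0`. -/
noncomputable def gReal (e : G.E) (i : ℕ) : FreeAlgebra K (G.V ⊕ G.DL) :=
  if h : 1 ≤ i ∧ i ≤ G.w e then G.gD K (Sum.inl ⟨(e, i), h⟩) else 0

/-- `e_i^*`, interpreted as `0` if `i > w(e)` or `i = 0`. -/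
noncomputable def gGhost (e : G.E) (i : ℕ) : FreeAlgebra K (G.V ⊕ G.DL) :=
  if h : 1 ≤ i ∧ i ≤ G.w e then G.gD K (Sum.inr ⟨(e, i), h⟩) else 0

end AlgebraDefs

/-- The defining relations of the weighted Leavitt path algebra `L_K(E,w)`:
the path algebra relations, the two families of Leavitt relations, and
(for a graph with finitely many vertices) `∑ v = 1`. -/
inductive LRel (G : WeightedGraph) (K : Type) [Field K] :
    FreeAlgebra K (G.V ⊕ G.DL) → FreeAlgebra K (G.V ⊕ G.DL) → Prop
  | vertex_eq (v : G.V) : LRel G K (G.gV K v * G.gV K v) (G.gV K v)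
  | vertex_ne (v v' : G.V) (h : v ≠ v') : LRel G K (G.gV K v * G.gV K v') 0
  | src (x : G.DL) : LRel G K (G.gV K (G.dS x) * G.gD K x) (G.gD K x)
  | rng (x : G.DL) : LRel G K (G.gD K x * G.gV K (G.dR x)) (G.gD K x)
  | inner_eq (v : G.V) (i : ℕ) (h1 : 1 ≤ i) (h2 : i ≤ G.vw v) :
      LRel G K (∑ᶠ e ∈ {e : G.E | G.s e = v}, G.gReal K e i * G.gGhost K e i)
        (G.gV K v)
  | inner_ne (v : G.V) (i j : ℕ) (h1 : 1 ≤ i) (h2 : i ≤ G.vw v)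
      (h3 : 1 ≤ j) (h4 : j ≤ G.vw v) (hij : i ≠ j) :
      LRel G K (∑ᶠ e ∈ {e : G.E | G.s e = v}, G.gReal K e i * G.gGhost K e j) 0
  | outer_eq (e : G.E) :
      LRel G K (∑ i ∈ Finset.Icc 1 (G.vw (G.s e)), G.gGhost K e i * G.gReal K e i)
        (G.gV K (G.r e))
  | outer_ne (e f : G.E) (h : G.s e = G.s f) (hef : e ≠ f) :
      LRel G K (∑ i ∈ Finset.Icc 1 (G.vw (G.s e)), G.gGhost K e i * G.gReal K f i) 0
  | unit (h : Finite G.V) : LRel G K (∑ᶠ v : G.V, G.gV K v) 1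

/-- The weighted Leavitt path algebra `L_K(E,w)`. -/
abbrev LWPA (G : WeightedGraph) (K : Type) [Field K] : Type :=
  RingQuot (LRel G K)

/-- image of a vertex in `L_K(E,w)`. -/
noncomputable def vx (G : WeightedGraph) (K : Type) [Field K] (v : G.V) : LWPA G K :=
  RingQuot.mkAlgHom K (LRel G K) (G.gV K v)

/-- image of a letter of `Ê_d` in `L_K(E,w)`. -/
noncomputable def dlx (G : WeightedGraph) (K : Type) [Field K] (x : G.DL) : LWPA G K :=
  RingQuot.mkAlgHom K (LRel G K) (G.gD K x)

/-- image of a d-word in `L_K(E,w)` (product of its letters). -/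
noncomputable def wordProd (G : WeightedGraph) (K : Type) [Field K]
    (l : List G.DL) : LWPA G K :=
  (l.map (G.dlx K)).prod

/-- image in `L_K(E,w)` of an arbitrary word in vertices and edges of `Ê_d`. -/
noncomputable def genProd (G : WeightedGraph) (K : Type) [Field K]
    (l : List (G.V ⊕ G.DL)) : LWPA G K :=
  (l.map (fun t => RingQuot.mkAlgHom K (LRel G K) (FreeAlgebra.ι K t))).prod

/-- degree of a generator (vertices have degree `0`). -/
noncomputable def genDeg (G : WeightedGraph) : G.V ⊕ G.DL → (ℕ →₀ ℤ)
  | Sum.inl _ => 0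
  | Sum.inr x => G.dDeg x

/-- degree of a word in the generators. -/
noncomputable def genWordDeg (G : WeightedGraph) (l : List (G.V ⊕ G.DL)) : ℕ →₀ ℤ :=
  (l.map G.genDeg).sum

/-- the homogeneous component of degree `g` of `L_K(E,w)` with respect to the
standard grading: the span of the images of all words of degree `g`. -/
noncomputable def component (G : WeightedGraph) (K : Type) [Field K] (g : ℕ →₀ ℤ) :
    Submodule K (LWPA G K) :=
  Submodule.span K
    {a : LWPA G K | ∃ l : List (G.V ⊕ G.DL), G.genWordDeg l = g ∧ a = G.genProd K l}

/-- `L_K(E,w)` is locally finite with respect to its standard grading. -/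
def LocallyFinite (G : WeightedGraph) (K : Type) [Field K] : Prop :=
  ∀ g : ℕ →₀ ℤ, FiniteDimensional K ↥(G.component K g)

end WeightedGraph

/-- The Gelfand–Kirillov dimension of a `K`-algebra `A`: the supremum over all
finite-dimensional subspaces `W ≤ A` of
`limsup_n log(dim_K (K + W + W² + ⋯ + Wⁿ)) / log n`. -/
noncomputable def gkDim (K : Type) [Field K] (A : Type) [Ring A] [Algebra K A] : EReal :=
  ⨆ (W : Submodule K A) (_ : FiniteDimensional K ↥W),
    Filter.limsup
      (fun n : ℕ =>
        ((Real.log (Module.finrank K ↥(∑ i ∈ Finset.range (n + 1), W ^ i) : ℝ) /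
            Real.log (n : ℝ) : ℝ) : EReal))
      Filter.atTop
section NodDecompositionProof

namespace WeightedGraph

/-- walk from `a` to `v` along edge list `l`. -/
def Walk (G : WeightedGraph) : G.V → G.V → List G.E → Prop
  | a, v, [] => a = v
  | a, v, e :: l => G.s e = a ∧ G.Walk (G.r e) v l

variable {G : WeightedGraph}

theorem walk_append {a v : G.V} {l₁ l₂ : List G.E} :
    G.Walk a v (l₁ ++ l₂) ↔ ∃ m, G.Walk a m l₁ ∧ G.Walk m v l₂ := by
  induction l₁ generalizing a with
  | nil => simp [Walk]
  | cons e t ih => simp [Walk, ih]; tauto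

theorem walk_reaches {a v : G.V} {l : List G.E} (h : G.Walk a v l) : G.Reaches a v := by
  induction l generalizing a with
  | nil => exact h ▸ Relation.ReflTransGen.refl
  | cons e t ih => exact Relation.ReflTransGen.head ⟨e, h.1, rfl⟩ (ih h.2)

theorem reaches_walk {a v : G.V} (h : G.Reaches a v) : ∃ l, G.Walk a v l := by
  induction h using Relation.ReflTransGen.head_induction_on with
  | refl => exact ⟨[], rfl⟩
  | head hab _ ih =>
    obtain ⟨e, he, hr⟩ := hab
    obtain ⟨l, hl⟩ := ih
    exact ⟨e :: l, he, hr ▸ hl⟩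

theorem inT_step {a : G.V} (h : G.InTRw a) {e : G.E} (he : G.s e = a) :
    G.InTRw (G.r e) := by
  obtain ⟨g, hg, hr⟩ := h
  exact ⟨g, hg, hr.tail ⟨e, he, rfl⟩⟩

theorem inT_walk {a m : G.V} {l : List G.E} (h : G.InTRw a) (hw : G.Walk a m l) :
    G.InTRw m := by
  induction l generalizing a with
  | nil => exact hw ▸ h
  | cons e t ih => exact ih (inT_step h hw.1) hw.2

theorem walk_chain' {v : G.V} : ∀ {l : List G.E} {a}, G.Walk a v l →
    l.Chain' (fun x y => G.r x = G.s y) := by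
  intro l
  induction l with
  | nil => intro _ _; exact List.isChain_nil
  | cons e t ih =>
    intro a h
    cases t with
    | nil => exact List.isChain_singleton _
    | cons f t' => exact List.isChain_cons_cons.mpr ⟨h.2.1.symm, ih h.2⟩

theorem walk_last {v : G.V} : ∀ {l : List G.E} {a}, G.Walk a v l → l ≠ [] →
    l.getLast?.map G.r = some v := by
  intro l
  induction l with
  | nil => simp
  | cons e t ih =>
    intro a h _
    cases t with
    | nil => simpa [Walk] using h.2
    | cons f t' => simpa [List.getLast?_cons_cons] using ih h.2 (by simp)

theorem sublist_pair_decomp {α : Type _} {x y : α} : ∀ {l : List α}, List.Sublist [x, y] l →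
    ∃ A B C, l = A ++ x :: (B ++ y :: C) := by
  intro l
  induction l with
  | nil => intro h; exact absurd h (by simp)
  | cons a t ih =>
    intro h
    rcases h with _ | ⟨_, _⟩ | _
    case cons h' =>
      obtain ⟨A, B, C, rfl⟩ := ih h'
      exact ⟨a :: A, B, C, rfl⟩
    case cons_cons h' =>
      obtain ⟨B, C, rfl⟩ := List.append_of_mem (List.singleton_sublist.mp h')
      exact ⟨[], B, C, rfl⟩


section WWB

variable {sp : G.V → G.E}

theorem uniqT (hwb : G.WeaklyWellBehaved) {a : G.V} (h : G.InTRw a) {e f : G.E}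
    (he : G.s e = a) (hf : G.s f = a) : e = f :=
  hwb.2.1 a h e f he hf

theorem noClosedWalkT (hwb : G.WeaklyWellBehaved) :
    ∀ (n : ℕ) (l : List G.E), l.length ≤ n → ∀ a, G.InTRw a → G.Walk a a l → l = [] := by
  intro n
  induction n with
  | zero =>
    intro l hl _ _ _
    exact List.length_eq_zero_iff.mp (Nat.le_zero.mp hl)
  | succ n ih =>
    intro l hl a ha hwalk
    by_contra hne
    by_cases hnd : (l.map G.s).Nodup
    · -- l is a cycle based at a, contradicting Cond4
      have hsrc : G.pSrc? l = some a := by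
        cases l with
        | nil => exact absurd rfl hne
        | cons e t => simp [pSrc?, hwalk.1]
      have hcyc : G.IsCycle l := by
        refine ⟨⟨hne, walk_chain' hwalk⟩, ?_, hnd⟩
        rw [hsrc]
        simpa [pRng?] using walk_last hwalk hne
      exact hwb.2.2.2 l hcyc a hsrc ha
    · -- extract a shorter closed walk
      have : ∃ m, List.Sublist [m, m] (l.map G.s) := by
        simpa [List.nodup_iff_sublist] using hnd
      obtain ⟨m, hm⟩ := this
      obtain ⟨l', hl', hmap⟩ := List.sublist_map_iff.mp hm
      obtain ⟨x, y, rfl⟩ : ∃ x y, l' = [x, y] := by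
        match l', hmap with
        | [x, y], _ => exact ⟨x, y, rfl⟩
        | [], h => simp at h
        | [x], h => simp at h
        | x :: y :: z :: t, h => simp at h
      have hx : G.s x = m := by simpa using (congrArg (·.head?) hmap).symm
      have hy : G.s y = m := by simpa using (congrArg (·.getLast?) hmap).symm
      obtain ⟨A, B, C, rfl⟩ := sublist_pair_decomp hl'
      obtain ⟨m₁, hA, hrest⟩ := walk_append.mp hwalk
      obtain ⟨m₂, hB, hC⟩ := walk_append.mp hrest.2
      -- hrest : s x = m₁ ∧ Walk (r x) a (B ++ y :: C) ; hC : s y = m₂ ∧ ...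
      have hmid : G.Walk (G.s x) (G.s x) (x :: B) := by
        refine ⟨rfl, ?_⟩
        have : m₂ = G.s x := by rw [hC.1.symm, hx, hy]
        exact this ▸ hB
      have hTx : G.InTRw (G.s x) := by
        have := inT_walk ha hA
        rwa [← hrest.1] at this
      have hlen : (x :: B).length ≤ n := by
        have := hl
        simp only [List.length_append, List.length_cons] at this ⊢
        omega
      exact absurd (ih (x :: B) hlen _ hTx hmid) (by simp)

theorem uniqueWalkT (hwb : G.WeaklyWellBehaved) :
    ∀ (l₁ : List G.E) {a v : G.V}, G.InTRw a → G.Walk a v l₁ →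
      ∀ l₂, G.Walk a v l₂ → l₁ = l₂ := by
  intro l₁
  induction l₁ with
  | nil =>
    intro a v ha h1 l₂ h2
    have : a = v := h1
    subst this
    exact (noClosedWalkT hwb l₂.length l₂ le_rfl a ha h2).symm
  | cons e t ih =>
    intro a v ha h1 l₂ h2
    cases l₂ with
    | nil =>
      have : a = v := h2
      subst this
      exact noClosedWalkT hwb (e :: t).length (e :: t) le_rfl a ha h1
    | cons f t₂ =>
      have hef : e = f := uniqT hwb ha h1.1 h2.1
      subst hef
      have := ih (inT_step ha h1.1) h1.2 t₂ h2.2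
      rw [this]

theorem vw_ge (e : G.E) : G.w e ≤ G.vw (G.s e) := by
  refine le_csSup ?_ ⟨e, rfl, rfl⟩
  exact ((G.rowFinite (G.s e)).image G.w).bddAbove

theorem special_of_weighted (hwb : G.WeaklyWellBehaved) (hsp : G.HasSpecial sp)
    {e : G.E} (hw : 1 < G.w e) : e = sp (G.s e) := by
  obtain ⟨h1, h2⟩ := hsp (G.s e) ⟨e, rfl⟩
  exact hwb.1 e (sp (G.s e)) hw (lt_of_lt_of_le hw ((vw_ge e).trans h2.ge)) h1.symm

theorem special_of_T (hwb : G.WeaklyWellBehaved) (hsp : G.HasSpecial sp)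
    {e : G.E} (hT : G.InTRw (G.s e)) : e = sp (G.s e) := by
  obtain ⟨h1, _⟩ := hsp (G.s e) ⟨e, rfl⟩
  exact uniqT hwb hT rfl h1

theorem maxOther_le_one (hwb : G.WeaklyWellBehaved) {e : G.E} (hw : 1 < G.w e) :
    G.maxOther e ≤ 1 := by
  refine csSup_le' ?_
  rintro n ⟨f, ⟨hf, hne⟩, rfl⟩
  by_contra h
  exact hne (hwb.1 f e (by omega) hw hf)

theorem maxOther_eq_zero_of_T (hwb : G.WeaklyWellBehaved) {e : G.E}
    (hT : G.InTRw (G.s e)) : G.maxOther e = 0 := by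
  refine Nat.le_zero.mp (csSup_le' ?_)
  rintro n ⟨f, ⟨hf, hne⟩, rfl⟩
  exact absurd (uniqT hwb (hf ▸ hT) rfl (hf.symm ▸ rfl)) hne


theorem q_unweighted (hwb : G.WeaklyWellBehaved)
    {e' : G.E} (hw' : 1 < G.w e') {v : G.V}
    {ptail : List G.E} (hp : G.Walk (G.r e') v ptail)
    {u : G.V} {ys : List G.E} (hys : G.Walk u v ys) (hne : ys ≠ [])
    (hlast : (e' :: ptail).getLast? ≠ ys.getLast?) :
    ∀ y ∈ ys, G.w y = 1 := by
  intro y hy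
  by_contra h1
  have hwy : 1 < G.w y := lt_of_le_of_ne (G.w_pos y) (Ne.symm h1)
  obtain ⟨pre, post, rfl⟩ := List.append_of_mem hy
  obtain ⟨m, hpre, hypost⟩ := walk_append.mp hys
  have hsy : G.s y = m := hypost.1
  have hpost : G.Walk (G.r y) v post := hypost.2
  have hTre' : G.InTRw (G.r e') := ⟨e', hw', Relation.ReflTransGen.refl⟩
  have hTry : G.InTRw (G.r y) := ⟨y, hwy, Relation.ReflTransGen.refl⟩
  have hylast : (pre ++ y :: post).getLast? = (y :: post).getLast? := by
    rw [List.getLast?_append]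
    cases hpost' : (y :: post).getLast? with
    | none => simp at hpost'
    | some c => simp
  by_cases he'y : e' = y
  · subst he'y
    have heq : ptail = post := uniqueWalkT hwb ptail hTre' hp post hpost
    exact hlast (by rw [hylast, heq])
  · by_cases hss : G.s e' = G.s y
    · exact he'y (hwb.1 e' y hw' hwy hss)
    · by_cases h3a : G.Reaches (G.r e') (G.s y)
      · obtain ⟨w₁, hw₁⟩ := reaches_walk h3a
        have hw2 : G.Walk (G.r e') v (w₁ ++ y :: post) :=
          walk_append.mpr ⟨G.s y, hw₁, rfl, hpost⟩
        have heq : ptail = w₁ ++ y :: post := uniqueWalkT hwb ptail hTre' hp _ hw2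
        refine hlast ?_
        rw [hylast, heq, show e' :: (w₁ ++ y :: post) = (e' :: w₁) ++ (y :: post) from rfl,
          List.getLast?_append]
        cases hpost' : (y :: post).getLast? with
        | none => simp at hpost'
        | some c => simp
      · by_cases h3b : G.Reaches (G.r y) (G.s e')
        · obtain ⟨w₂, hw₂⟩ := reaches_walk h3b
          have hw2 : G.Walk (G.r y) v (w₂ ++ e' :: ptail) :=
            walk_append.mpr ⟨G.s e', hw₂, rfl, hp⟩
          have heq : post = w₂ ++ e' :: ptail := uniqueWalkT hwb post hTry hpost _ hw2
          refine hlast ?_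
          rw [hylast, heq]
          rw [show y :: (w₂ ++ e' :: ptail) = (y :: w₂) ++ (e' :: ptail) from rfl,
            List.getLast?_append]
          cases hpt : (e' :: ptail).getLast? with
          | none => simp at hpt
          | some c => simp
        · have hnl : ¬ G.InLine e' y := by
            rintro (h | h | h)
            · exact he'y h
            · exact h3a h
            · exact h3b h
          exact hwb.2.2.1 e' y hw' hwy hnl v (walk_reaches hp) (walk_reaches hpost)


end WWB


section Parse

theorem peel_real : ∀ (o : List G.DL) (x : G.HatE), o.head? = some (Sum.inl x) →
    ∃ (P : List G.HatE) (rest : List G.DL), o = P.map Sum.inl ++ rest ∧ P ≠ [] ∧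
      P.head? = some x ∧ ∀ z ∈ rest.head?, ∃ y, z = Sum.inr y := by
  intro o
  induction o with
  | nil => simp
  | cons a o' ih =>
    intro x hx
    have ha : a = Sum.inl x := by simpa using hx
    subst ha
    cases o' with
    | nil => exact ⟨[x], [], by simp, by simp, by simp, by simp⟩
    | cons b o'' =>
      cases b with
      | inl y =>
        obtain ⟨P, rest, h1, h2, h3, h4⟩ := ih y (by simp)
        exact ⟨x :: P, rest, by simp [h1], by simp, by simp, h4⟩
      | inr y => exact ⟨[x], Sum.inr y :: o'', by simp, by simp, by simp, fun z hz => ⟨y, by simpa using hz.symm⟩⟩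

theorem peel_ghost : ∀ (o : List G.DL) (x : G.HatE), o.head? = some (Sum.inr x) →
    ∃ (Q : List G.HatE) (rest : List G.DL), o = Q.map Sum.inr ++ rest ∧ Q ≠ [] ∧
      Q.head? = some x ∧ ∀ z ∈ rest.head?, ∃ y, z = Sum.inl y := by
  intro o
  induction o with
  | nil => simp
  | cons a o' ih =>
    intro x hx
    have ha : a = Sum.inr x := by simpa using hx
    subst ha
    cases o' with
    | nil => exact ⟨[x], [], by simp, by simp, by simp, by simp⟩
    | cons b o'' =>
      cases b with
      | inr y =>
        obtain ⟨Q, rest, h1, h2, h3, h4⟩ := ih y (by simp)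
        exact ⟨x :: Q, rest, by simp [h1], by simp, by simp, h4⟩
      | inl y => exact ⟨[x], Sum.inl y :: o'', by simp, by simp, by simp, fun z hz => ⟨y, by simpa using hz.symm⟩⟩

/-- convert a chain of edges of `Ê` into a walk in `E`. -/
theorem walk_of_hatChain : ∀ (P : List G.HatE) (a v : G.V), (P = [] → a = v) →
    (∀ z ∈ P.head?, G.hatS z = a) → (∀ z ∈ P.getLast?, G.hatR z = v) →
    P.Chain' (fun p q => G.hatR p = G.hatS q) →
    G.Walk a v (P.map (fun z => z.1.1)) := by
  intro P
  induction P with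
  | nil => intro a v h _ _ _; exact h rfl
  | cons z P' ih =>
    intro a v _ hhead hlast hchain
    refine ⟨hhead _ rfl, ?_⟩
    cases P' with
    | nil => exact hlast z rfl
    | cons z' P'' =>
      refine ih (G.r z.1.1) v (by simp) ?_ ?_ (List.isChain_cons_cons.mp hchain).2
      · intro w hw
        have : w = z' := by simpa using hw.symm
        subst this
        exact ((List.isChain_cons_cons.mp hchain).1).symm
      · intro w hw
        exact hlast w (by rw [List.getLast?_cons_cons]; exact hw)

end Parse


section Decomp

def Decomp (G : WeightedGraph) (o : List G.DL) : Prop :=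
  (∃ (n : ℕ), 0 < n ∧ ∃ ps qs : Fin n → List G.HatE,
      (∀ k, G.IsSuperSpecial (ps k)) ∧ (∀ k, G.IsUnweightedPath (qs k)) ∧
      o = (List.ofFn (fun k : Fin n =>
            G.embR (ps k) ++ G.dStar (G.embR (qs k)))).flatten) ∨
  (∃ (m : ℕ) (ps : Fin (m + 1) → List G.HatE) (qs : Fin m → List G.HatE),
      (∀ k, G.IsSuperSpecial (ps k)) ∧ (∀ k, G.IsUnweightedPath (qs k)) ∧
      o = (List.ofFn (fun k : Fin m =>
            G.embR (ps k.castSucc) ++ G.dStar (G.embR (qs k)))).flatten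
          ++ G.embR (ps (Fin.last m)))

theorem decomp_last {P : List G.HatE} (hP : G.IsSuperSpecial P) :
    Decomp G (G.embR P) :=
  Or.inr ⟨0, fun _ => P, fun k => k.elim0, fun _ => hP, fun k => k.elim0, by simp⟩

theorem decomp_pq {P q : List G.HatE} (hP : G.IsSuperSpecial P)
    (hq : G.IsUnweightedPath q) :
    Decomp G (G.embR P ++ G.dStar (G.embR q)) :=
  Or.inl ⟨1, one_pos, fun _ => P, fun _ => q, fun _ => hP, fun _ => hq, by
    simp [List.ofFn_succ]⟩

theorem decomp_cons {P q : List G.HatE} {rest : List G.DL} (hP : G.IsSuperSpecial P)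
    (hq : G.IsUnweightedPath q) (h : Decomp G rest) :
    Decomp G (G.embR P ++ (G.dStar (G.embR q) ++ rest)) := by
  rcases h with ⟨n, hn, ps, qs, h1, h2, rfl⟩ | ⟨m, ps, qs, h1, h2, rfl⟩
  · refine Or.inl ⟨n + 1, Nat.succ_pos _, Fin.cons P ps, Fin.cons q qs, ?_, ?_, ?_⟩
    · intro k
      induction k using Fin.cases with
      | zero => simpa using hP
      | succ i => simpa [Fin.cons_succ] using h1 i
    · intro k
      induction k using Fin.cases with
      | zero => simpa using hq
      | succ i => simpa [Fin.cons_succ] using h2 i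
    · simp [List.ofFn_succ, Fin.cons_succ, List.append_assoc]
  · refine Or.inr ⟨m + 1, Fin.cons P ps, Fin.cons q qs, ?_, ?_, ?_⟩
    · intro k
      induction k using Fin.cases with
      | zero => simpa using hP
      | succ i => simpa [Fin.cons_succ] using h1 i
    · intro k
      induction k using Fin.cases with
      | zero => simpa using hq
      | succ i => simpa [Fin.cons_succ] using h2 i
    · rw [List.ofFn_succ]
      simp only [Fin.castSucc_zero, Fin.cons_zero, Fin.cons_succ, ← Fin.succ_castSucc,
        ← Fin.succ_last, List.flatten_cons, List.append_assoc]

end Decomp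


theorem dStar_embR_reverse (Q : List G.HatE) :
    G.dStar (G.embR Q.reverse) = Q.map Sum.inr := by
  simp only [dStar, embR, List.map_map, List.map_reverse, List.reverse_reverse]
  induction Q with
  | nil => rfl
  | cons a t iht => simp [iht]; rfl

theorem nod_main (hwb : G.WeaklyWellBehaved) {sp : G.V → G.E} (hsp : G.HasSpecial sp) :
    ∀ (N : ℕ) (o : List G.DL), o.length ≤ N → G.IsNod sp o →
      ∀ x : G.HatE, o.head? = some (Sum.inl x) → 1 < G.w x.1.1 → 2 ≤ x.1.2 →
      Decomp G o := by
  intro N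
  induction N with
  | zero =>
    intro o hlen _ x hx _ _
    rw [List.length_eq_zero_iff.mp (Nat.le_zero.mp hlen)] at hx
    simp at hx
  | succ N ih =>
    intro o hlen hnod x hx hwx hix
    obtain ⟨P, rest, rfl, hPne, hPhead, hrest⟩ := peel_real o x hx
    obtain ⟨hdw, hnf⟩ := hnod
    obtain ⟨Pt, rfl⟩ : ∃ Pt, P = x :: Pt := by
      cases P with
      | nil => simp at hPhead
      | cons a t =>
        have : a = x := by simpa using hPhead
        exact ⟨t, by rw [this]⟩
    set P := x :: Pt with hP
    have hchainP : P.Chain' (fun p q => G.hatR p = G.hatS q) := by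
      have h := (List.isChain_append.mp hdw).1
      rw [List.isChain_map] at h
      exact h
    obtain ⟨c, hc⟩ : ∃ c, P.getLast? = some c :=
      ⟨_, List.getLast?_eq_getLast (by simp [hP])⟩
    set v := G.hatR c with hv
    have hchain' := List.isChain_cons.mp hchainP
    have hwalkTail : G.Walk (G.r x.1.1) v (Pt.map (fun z => z.1.1)) := by
      refine walk_of_hatChain Pt _ _ ?_ ?_ ?_ hchain'.2
      · intro h
        subst h
        have : c = x := by simpa [hP] using hc.symm
        rw [hv, this]
        rfl
      · intro z hz
        exact (hchain'.1 z hz).symm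
      · intro z hz
        have : P.getLast? = some z := by
          cases Pt with
          | nil => simp at hz
          | cons b t => rw [hP, List.getLast?_cons_cons]; exact hz
        rw [hc] at this
        rw [hv, Option.some_inj.mp this]
    have hTbase : G.InTRw (G.r x.1.1) := ⟨x.1.1, hwx, Relation.ReflTransGen.refl⟩
    have hTv : G.InTRw v := inT_walk hTbase hwalkTail
    have hTtail : ∀ z ∈ Pt, G.InTRw (G.s z.1.1) := by
      intro z hz
      obtain ⟨pre, post, rfl⟩ := List.append_of_mem hz
      rw [List.map_append, List.map_cons] at hwalkTail
      obtain ⟨m, hpre, hzpost⟩ := walk_append.mp hwalkTail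
      rw [hzpost.1]
      exact inT_walk hTbase hpre
    have hssP : G.IsSuperSpecial P := by
      refine ⟨⟨by simp [hP], hchainP⟩, ?_⟩
      intro z hz
      rw [hP, List.mem_cons] at hz
      rcases hz with rfl | hz
      · exact lt_of_le_of_lt (maxOther_le_one hwb hwx) hix
      · rw [maxOther_eq_zero_of_T hwb (hTtail z hz)]
        exact z.2.1
    have hcsp : c.1.1 = sp (G.s c.1.1) := by
      cases ht : Pt with
      | nil =>
        have : c = x := by simpa [hP, ht] using hc.symm
        subst this
        exact special_of_weighted hwb hsp hwx
      | cons b t =>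
        have hcPt : Pt.getLast? = some c := by
          rw [← hc, hP, ht, List.getLast?_cons_cons]
        have : c ∈ Pt := by
          obtain ⟨h1, h2⟩ := List.mem_getLast?_eq_getLast (Option.mem_def.mpr hcPt)
          exact h2 ▸ List.getLast_mem h1
        exact special_of_T hwb hsp (hTtail c this)
    cases rest with
    | nil =>
      rw [List.append_nil]
      exact decomp_last hssP
    | cons z₀ rest₂ =>
      obtain ⟨Y, rfl⟩ := hrest z₀ rfl
      obtain ⟨Q, rest', hQeq, hQne, hQhead, hrest'⟩ := peel_ghost (Sum.inr Y :: rest₂) Y rfl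
      rw [hQeq] at hdw hnf hlen ⊢
      obtain ⟨_, hchrest, hbound⟩ := List.isChain_append.mp hdw
      obtain ⟨_, hnfrest, hnfbound⟩ := List.isChain_append.mp hnf
      have hPlast : (P.map Sum.inl).getLast? = some (Sum.inl c : G.DL) := by
        rw [List.getLast?_map, hc]
        rfl
      have hQRhead : (Q.map Sum.inr ++ rest').head? = some (Sum.inr Y : G.DL) := by
        cases Q with
        | nil => exact absurd rfl hQne
        | cons a t =>
          have : a = Y := by simpa using hQhead
          simp [this]
      have hvY : G.r Y.1.1 = v := by
        have := hbound _ (by rw [hPlast]; rfl) _ (by rw [hQRhead]; rfl)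
        exact this.symm
      have hYc : c.1.1 ≠ Y.1.1 := by
        have := hnfbound _ (by rw [hPlast]; rfl) _ (by rw [hQRhead]; rfl)
        intro hcontra
        exact this ⟨hcontra, hcsp⟩
      -- the ghost segment
      set q := Q.reverse with hq
      have hchainQ : Q.Chain' (fun p q => G.hatS p = G.hatR q) := by
        have h := (List.isChain_append.mp hchrest).1
        rw [List.isChain_map] at h
        exact h
      have hchainq : q.Chain' (fun p q => G.hatR p = G.hatS q) := by
        rw [hq]; refine List.isChain_reverse.mpr ?_
        exact hchainQ.imp (fun a b h => h.symm)
      obtain ⟨y1, hy1⟩ : ∃ y1, Q.getLast? = some y1 :=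
        ⟨_, List.getLast?_eq_getLast hQne⟩
      have hqhead : q.head? = some y1 := by rw [hq, List.head?_reverse, hy1]
      have hqlast : q.getLast? = some Y := by
        rw [hq, List.getLast?_reverse]
        cases Q with
        | nil => exact absurd rfl hQne
        | cons a t => simpa using hQhead
      have hqne : q ≠ [] := by
        intro h
        rw [h] at hqhead
        simp at hqhead
      have hwalkq : G.Walk (G.hatS y1) v (q.map (fun z => z.1.1)) := by
        refine walk_of_hatChain q _ _ (fun h => absurd h hqne) ?_ ?_ hchainq
        · intro z hz
          rw [hqhead] at hz
          rw [Option.mem_def, Option.some_inj] at hz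
          rw [hz]
        · intro z hz
          rw [hqlast] at hz
          rw [Option.mem_def, Option.some_inj] at hz
          rw [← hz]
          exact hvY
      have hqw : ∀ y ∈ q.map (fun z : G.HatE => z.1.1), G.w y = 1 := by
        refine q_unweighted hwb hwx hwalkTail hwalkq (by simp [hqne]) ?_
        have hL : ((x.1.1 : G.E) :: Pt.map (fun z => z.1.1)).getLast? = some c.1.1 := by
          have : (x :: Pt).map (fun z : G.HatE => z.1.1)
              = x.1.1 :: Pt.map (fun z => z.1.1) := rfl
          rw [← this, List.getLast?_map, ← hP, hc]
          rfl
        have hR : (q.map (fun z : G.HatE => z.1.1)).getLast? = some Y.1.1 := by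
          rw [List.getLast?_map, hqlast]
          rfl
        rw [hL, hR]
        simp [hYc]
      have hUq : G.IsUnweightedPath q := by
        refine ⟨⟨hqne, hchainq⟩, ?_⟩
        intro z hz
        exact hqw z.1.1 (List.mem_map_of_mem hz)
      have hdstar : G.dStar (G.embR q) = Q.map Sum.inr := by
        rw [hq]
        exact dStar_embR_reverse Q
      cases rest' with
      | nil =>
        rw [List.append_nil]
        have := decomp_pq (G := G) hssP hUq
        rwa [hdstar] at this
      | cons t rest'' =>
        obtain ⟨z, rfl⟩ := hrest' t rfl
        obtain ⟨_, hchrest', hbound2⟩ := List.isChain_append.mp hchrest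
        obtain ⟨_, hnfrest', hnfbound2⟩ := List.isChain_append.mp hnfrest
        have hQlast' : (Q.map Sum.inr).getLast? = some (Sum.inr y1 : G.DL) := by
          rw [List.getLast?_map, hy1]
          rfl
        have hy1q : y1 ∈ q := List.mem_of_mem_head? (by rw [hqhead]; rfl)
        have hwy1 : G.w y1.1.1 = 1 := hqw y1.1.1 (List.mem_map_of_mem hy1q)
        have hy1idx : y1.1.2 = 1 := by
          have h1 := y1.2.1
          have h2 := y1.2.2
          omega
        have hsz : G.s y1.1.1 = G.s z.1.1 := by
          have := hbound2 _ (by rw [hQlast']; rfl) _ rfl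
          exact this
        have hzidx : 2 ≤ z.1.2 := by
          have hforb := hnfbound2 _ (by rw [hQlast']; rfl) _ rfl
          by_contra hcon
          have : z.1.2 = 1 := le_antisymm (by omega) z.2.1
          exact hforb ⟨hy1idx, this, hsz⟩
        have hwz : 1 < G.w z.1.1 := lt_of_lt_of_le hzidx z.2.2
        have hlen' : (Sum.inl z :: rest'').length ≤ N := by
          have hQlen : 1 ≤ Q.length := List.length_pos_iff.mpr hQne
          simp only [List.length_append, List.length_map, List.length_cons, hP] at hlen ⊢
          omega
        have hdec := ih (Sum.inl z :: rest'') hlen' ⟨hchrest', hnfrest'⟩ z rfl hwz hzidx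
        have := decomp_cons (G := G) hssP hUq hdec
        rwa [hdstar] at this

end WeightedGraph

end NodDecompositionProof
/-- **Lemma (Statement 5).** Suppose the weighted part of `(E,w)` is weakly
well-behaved.  If `o` is a nod-path whose first letter is `e_i` with `e` a
weighted edge and `2 ≤ i ≤ w(e)`, then `o = p₁q₁^* ⋯ p_nq_n^*` or
`o = p₁q₁^* ⋯ p_{n-1}q_{n-1}^* p_n`, where the `p_k` are super-special paths in
`Ê` and the `q_k` are unweighted paths in `Ê`. -/
theorem nod_decomposition (G : WeightedGraph) (hwb : G.WeaklyWellBehaved)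
    (sp : G.V → G.E) (hsp : G.HasSpecial sp)
    (o : List G.DL) (hnod : G.IsNod sp o)
    (e : G.HatE) (h1 : o.head? = some (Sum.inl e))
    (hw : 1 < G.w e.1.1) (hi : 2 ≤ e.1.2) :
    (∃ (n : ℕ), 0 < n ∧ ∃ ps qs : Fin n → List G.HatE,
        (∀ k, G.IsSuperSpecial (ps k)) ∧ (∀ k, G.IsUnweightedPath (qs k)) ∧
        o = (List.ofFn (fun k : Fin n =>
              G.embR (ps k) ++ G.dStar (G.embR (qs k)))).flatten) ∨
    (∃ (m : ℕ) (ps : Fin (m + 1) → List G.HatE) (qs : Fin m → List G.HatE),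
        (∀ k, G.IsSuperSpecial (ps k)) ∧ (∀ k, G.IsUnweightedPath (qs k)) ∧
        o = (List.ofFn (fun k : Fin m =>
              G.embR (ps k.castSucc) ++ G.dStar (G.embR (qs k)))).flatten
            ++ G.embR (ps (Fin.last m))) := by
  exact WeightedGraph.nod_main hwb hsp o.length o le_rfl hnod e h1 hw hi
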